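/- The function g(θ) = √(b/(ωD)) tan(θ) − tanh(√(b/D)(θ/√ω − L)) is continuous and strictly monotone on (π/2, π) when L > π/√ω, and satisfies lim_{θ→(π/2)⁺} g(θ) = −∞ and g(π) > 0; hence g has exactly one zero in (π/2, π). -/

import Mathlib

open Real

lemma my_hasDerivAt_tanh (x : ℝ) :
    HasDerivAt Real.tanh (1 / Real.cosh x ^ 2) x := by
  have h : HasDerivAt (fun y => Real.sinh y / Real.cosh y)
      ((Real.cosh x * Real.cosh x - Real.sinh x * Real.sinh x) / Real.cosh x ^ 2) x :=
    (Real.hasDerivAt_sinh x).div (Real.hasDerivAt_cosh x) (Real.cosh_pos x).ne'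
  have heq : (fun y => Real.sinh y / Real.cosh y) = Real.tanh := by
    funext y; rw [Real.tanh_eq_sinh_div_cosh]
  rw [heq] at h
  convert h using 1
  have := Real.cosh_sq_sub_sinh_sq x
  field_simp
  nlinarith
lemma my_continuous_tanh : Continuous Real.tanh :=
  continuous_iff_continuousAt.2 fun x => (my_hasDerivAt_tanh x).continuousAt

lemma my_abs_tanh_le_one (x : ℝ) : |Real.tanh x| ≤ 1 := by
  rw [Real.tanh_eq_sinh_div_cosh, abs_div, abs_of_pos (Real.cosh_pos x),
    div_le_one (Real.cosh_pos x)]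
  nlinarith [Real.cosh_sq_sub_sinh_sq x, Real.cosh_pos x, abs_nonneg (Real.sinh x),
    sq_abs (Real.sinh x)]

lemma my_tanh_neg_of_neg {x : ℝ} (hx : x < 0) : Real.tanh x < 0 := by
  rw [Real.tanh_eq_sinh_div_cosh]
  exact div_neg_of_neg_of_pos (Real.sinh_neg_iff.2 hx) (Real.cosh_pos x)

theorem stmt_15 (b D ω L : ℝ) (hb : 0 < b) (hD : 0 < D) (hω : 0 < ω)
    (hL : π / Real.sqrt ω < L)
    (g : ℝ → ℝ)
    (hg : ∀ θ : ℝ, g θ = Real.sqrt (b / (ω * D)) * Real.tan θ -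
        Real.tanh (Real.sqrt (b / D) * (θ / Real.sqrt ω - L))) :
    ContinuousOn g (Set.Ioo (π / 2) π) ∧
    StrictMonoOn g (Set.Ioo (π / 2) π) ∧
    Filter.Tendsto g (nhdsWithin (π / 2) (Set.Ioi (π / 2))) Filter.atBot ∧
    0 < g π ∧
    (∃! θ : ℝ, θ ∈ Set.Ioo (π / 2) π ∧ g θ = 0) := by
  set c := Real.sqrt (b / (ω * D)) with hc_def
  set k := Real.sqrt (b / D) with hk_def
  set s := Real.sqrt ω with hs_def
  have hs : 0 < s := Real.sqrt_pos.2 hω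
  have hc : 0 < c := Real.sqrt_pos.2 (div_pos hb (mul_pos hω hD))
  have hk : 0 < k := Real.sqrt_pos.2 (div_pos hb hD)
  have hks : k / s = c := by
    rw [hk_def, hs_def, hc_def, ← Real.sqrt_div (div_pos hb hD).le ω, div_div, mul_comm D ω]
  have hgfun : g = fun θ => c * Real.tan θ - Real.tanh (k * (θ / s - L)) := by
    funext θ; exact hg θ
  -- continuity on the interval
  have hcosne : ∀ θ ∈ Set.Ioo (π / 2) π, Real.cos θ < 0 := by
    intro θ hθ
    exact Real.cos_neg_of_pi_div_two_lt_of_lt hθ.1 (by linarith [hθ.2, Real.pi_pos])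
  have hcont : ContinuousOn g (Set.Ioo (π / 2) π) := by
    rw [hgfun]
    intro θ hθ
    have htan : ContinuousAt Real.tan θ := Real.continuousAt_tan.2 (hcosne θ hθ).ne
    have hin : Continuous fun x : ℝ => k * (x / s - L) := by fun_prop
    have hca : ContinuousAt (fun x => c * Real.tan x - Real.tanh (k * (x / s - L))) θ :=
      (htan.const_mul c).sub ((my_continuous_tanh.comp hin).continuousAt)
    exact hca.continuousWithinAt
  -- derivative
  have hderiv : ∀ θ ∈ Set.Ioo (π / 2) π,
      HasDerivAt g (c * (1 / Real.cos θ ^ 2) - 1 / Real.cosh (k * (θ / s - L)) ^ 2 * (k / s)) θ := by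
    intro θ hθ
    rw [hgfun]
    have h1 : HasDerivAt (fun x : ℝ => k * (x / s - L)) (k / s) θ := by
      have : HasDerivAt (fun x : ℝ => x / s - L) (1 / s) θ := by
        simpa using ((hasDerivAt_id θ).div_const s).sub_const L
      simpa [div_eq_mul_inv] using this.const_mul k
    have h2 : HasDerivAt (fun x => Real.tanh (k * (x / s - L)))
        (1 / Real.cosh (k * (θ / s - L)) ^ 2 * (k / s)) θ :=
      (my_hasDerivAt_tanh _).comp θ h1
    exact ((Real.hasDerivAt_tan (hcosne θ hθ).ne).const_mul c).sub h2
  have hderiv_pos : ∀ θ ∈ Set.Ioo (π / 2) π,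
      0 < c * (1 / Real.cos θ ^ 2) - 1 / Real.cosh (k * (θ / s - L)) ^ 2 * (k / s) := by
    intro θ hθ
    rw [hks]
    have hcn := hcosne θ hθ
    have hcos1 : Real.cos θ ^ 2 < 1 := by
      have h1 : Real.cos π < Real.cos θ :=
        Real.strictAntiOn_cos ⟨by linarith [hθ.1, Real.pi_pos], le_of_lt hθ.2⟩
          ⟨Real.pi_pos.le, le_refl π⟩ hθ.2
      rw [Real.cos_pi] at h1
      nlinarith
    have hcospos : 0 < Real.cos θ ^ 2 := by nlinarith
    have h1 : 1 < 1 / Real.cos θ ^ 2 := by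
      rw [lt_div_iff₀ hcospos]; linarith
    have hcosh : 1 ≤ Real.cosh (k * (θ / s - L)) ^ 2 := by
      nlinarith [Real.one_le_cosh (k * (θ / s - L))]
    have h2 : 1 / Real.cosh (k * (θ / s - L)) ^ 2 ≤ 1 := by
      rw [div_le_one (by positivity)]; exact hcosh
    nlinarith
  have hmono : StrictMonoOn g (Set.Ioo (π / 2) π) := by
    apply StrictMonoOn.mono (s := Set.Ioo (π / 2) π) ?_ le_rfl
    apply strictMonoOn_of_deriv_pos (convex_Ioo _ _) hcont
    intro θ hθ
    rw [interior_Ioo] at hθ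
    rw [(hderiv θ hθ).deriv]
    exact hderiv_pos θ hθ
  -- tendsto atBot
  have htanbot : Filter.Tendsto Real.tan (nhdsWithin (π / 2) (Set.Ioi (π / 2))) Filter.atBot := by
    have hmap : Filter.Tendsto (fun θ => θ - π) (nhdsWithin (π / 2) (Set.Ioi (π / 2)))
        (nhdsWithin (-(π / 2)) (Set.Ioi (-(π / 2)))) := by
      rw [tendsto_nhdsWithin_iff]
      constructor
      · have : Filter.Tendsto (fun θ : ℝ => θ - π) (nhds (π / 2)) (nhds (π / 2 - π)) :=
          (continuous_id.sub continuous_const).tendsto _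
        rw [show π / 2 - π = -(π / 2) by ring] at this
        exact this.mono_left nhdsWithin_le_nhds
      · filter_upwards [self_mem_nhdsWithin] with θ hθ
        simp only [Set.mem_Ioi] at hθ ⊢
        linarith
    have := Real.tendsto_tan_neg_pi_div_two.comp hmap
    refine this.congr fun θ => ?_
    exact Real.tan_sub_pi θ
  have hbot : Filter.Tendsto g (nhdsWithin (π / 2) (Set.Ioi (π / 2))) Filter.atBot := by
    have h1 : Filter.Tendsto (fun θ => c * Real.tan θ + 1)
        (nhdsWithin (π / 2) (Set.Ioi (π / 2))) Filter.atBot := by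
      exact Filter.tendsto_atBot_add_const_right _ 1 (htanbot.const_mul_atBot hc)
    apply Filter.tendsto_atBot_mono _ h1
    intro θ
    rw [hg θ]
    have := abs_le.1 (my_abs_tanh_le_one (k * (θ / s - L)))
    linarith [this.1]
  -- g π > 0
  have hgπ : 0 < g π := by
    rw [hg π, Real.tan_pi, mul_zero, zero_sub, neg_pos]
    apply my_tanh_neg_of_neg
    apply mul_neg_of_pos_of_neg hk
    have : π / s < L := hL
    linarith
  refine ⟨hcont, hmono, hbot, hgπ, ?_⟩
  -- existence of zero
  have hπ2 : π / 2 < π := by linarith [Real.pi_pos]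
  -- get a point a in Ioo with g a < 0
  have hev1 : ∀ᶠ θ in nhdsWithin (π / 2) (Set.Ioi (π / 2)), g θ < 0 :=
    hbot.eventually (Filter.eventually_lt_atBot 0)
  have hev2 : ∀ᶠ θ in nhdsWithin (π / 2) (Set.Ioi (π / 2)), θ < π :=
    eventually_nhdsWithin_of_eventually_nhds (Filter.Tendsto.eventually_lt_const hπ2 Filter.tendsto_id)
  obtain ⟨a, ha0, haπ, ha2⟩ :
      ∃ a, g a < 0 ∧ a < π ∧ π / 2 < a := by
    have : ∀ᶠ θ in nhdsWithin (π / 2) (Set.Ioi (π / 2)), g θ < 0 ∧ θ < π ∧ π / 2 < θ := by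
      filter_upwards [hev1, hev2, self_mem_nhdsWithin] with θ h1 h2 h3
      exact ⟨h1, h2, h3⟩
    exact this.exists
  -- get a point near π with g > 0
  have hcontπ : ContinuousAt g π := by
    rw [hgfun]
    have : Real.cos π ≠ 0 := by rw [Real.cos_pi]; norm_num
    have hin : Continuous fun x : ℝ => k * (x / s - L) := by fun_prop
    exact ContinuousAt.sub ((Real.continuousAt_tan.2 this).const_mul c)
      ((my_continuous_tanh.comp hin).continuousAt)
  have hevb : ∀ᶠ θ in nhdsWithin π (Set.Iio π), 0 < g θ ∧ a < θ ∧ θ < π := by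
    have h1 : ∀ᶠ θ in nhds π, 0 < g θ := hcontπ.eventually (eventually_gt_nhds hgπ)
    have h2 : ∀ᶠ θ in nhds π, a < θ := Filter.eventually_of_mem (Ioi_mem_nhds haπ) fun x hx => hx
    filter_upwards [eventually_nhdsWithin_of_eventually_nhds h1,
      eventually_nhdsWithin_of_eventually_nhds h2, self_mem_nhdsWithin] with θ k1 k2 k3
    exact ⟨k1, k2, k3⟩
  obtain ⟨e, he0, hae, heπ⟩ := hevb.exists
  have he : e ∈ Set.Ioo (π / 2) π := ⟨by linarith, heπ⟩
  have hamem : a ∈ Set.Ioo (π / 2) π := ⟨ha2, haπ⟩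
  have hsub : Set.Icc a e ⊆ Set.Ioo (π / 2) π := fun x hx =>
    ⟨by linarith [hx.1], by linarith [hx.2]⟩
  have hivt := intermediate_value_Icc (le_of_lt hae) (hcont.mono hsub)
  have h0mem : (0 : ℝ) ∈ Set.Icc (g a) (g e) := ⟨le_of_lt ha0, le_of_lt he0⟩
  obtain ⟨θ₀, hθ₀mem, hθ₀⟩ := hivt h0mem
  refine ⟨θ₀, ⟨hsub hθ₀mem, hθ₀⟩, ?_⟩
  rintro y ⟨hy, hy0⟩
  exact hmono.injOn hy (hsub hθ₀mem) (by rw [hy0, hθ₀])
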